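/- The sequence of Apéry numbers B_n is strictly log-convex: B_n^2 < B_{n-1} B_{n+1} for all n ≥ 1. -/

import Mathlib

/-- The Apéry numbers `B_n = Σ_{k=0}^n C(n,k)^2 C(n+k,k)`. -/
def aperyB (n : ℕ) : ℕ :=
  ∑ k ∈ Finset.range (n + 1), (Nat.choose n k) ^ 2 * Nat.choose (n + k) k

/-- `A n k = C(n,k)^2 C(n+k,k)` as a rational number. -/
noncomputable def Aq (n k : ℕ) : ℚ := (n.choose k : ℚ) ^ 2 * ((n + k).choose k : ℚ)

/-- WZ certificate polynomial. -/
noncomputable def qq (n k : ℕ) : ℚ :=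
  (k : ℚ) ^ 2 + (6 * (n : ℚ) + 1) * k - (11 * (n : ℚ) ^ 2 + 15 * n + 4)

lemma lemA (N k : ℕ) : (N + 1 - k) * (N + 1).choose k = (N + 1) * N.choose k :=
  calc (N + 1 - k) * (N + 1).choose k = (N + 1).choose k * (N + 1 - k) := mul_comm _ _
    _ = (N + 1).choose (k + 1) * (k + 1) := (Nat.choose_succ_right_eq _ _).symm
    _ = (N + 1) * N.choose k := (Nat.add_one_mul_choose_eq N k).symm

lemma lemA' (N k : ℕ) (h : k ≤ N + 1) :
    ((N : ℚ) + 1 - k) * ((N + 1).choose k : ℚ) = ((N : ℚ) + 1) * (N.choose k : ℚ) := by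
  have := lemA N k
  have hc : ((N + 1 - k : ℕ) : ℚ) = (N : ℚ) + 1 - k := by
    push_cast [Nat.cast_sub h]; ring
  calc ((N : ℚ) + 1 - k) * ((N + 1).choose k : ℚ)
      = ((N + 1 - k : ℕ) : ℚ) * ((N + 1).choose k : ℚ) := by rw [hc]
    _ = ((N : ℚ) + 1) * (N.choose k : ℚ) := by exact_mod_cast congrArg (Nat.cast (R := ℚ)) this

lemma perk_main (m j : ℕ) (hj : j ≤ m) :
    ((m:ℚ)+2)^2 * Aq (m+2) (j+1) - (11*(m:ℚ)^2+33*(m:ℚ)+25) * Aq (m+1) (j+1)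
      - ((m:ℚ)+1)^2 * Aq m (j+1)
    = Aq (m+1) (j+1) * qq (m+1) (j+2) - Aq (m+1) j * qq (m+1) (j+1) := by
  have hjq : (j : ℚ) ≤ m := by exact_mod_cast hj
  have hne1 : (m:ℚ) + 1 - j ≠ 0 := by linarith
  have hne2 : (m:ℚ) + 1 ≠ 0 := by positivity
  have hne3 : (m:ℚ) + 2 ≠ 0 := by positivity
  have hne4 : (m:ℚ) + j + 2 ≠ 0 := by positivity
  -- base quantities
  set x : ℚ := ((m+1).choose (j+1) : ℚ) with hx
  set y : ℚ := ((m+j+2).choose (j+1) : ℚ) with hy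
  -- foreign chooses
  have h3 : ((m+2).choose (j+1) : ℚ) = ((m:ℚ)+2) * x / ((m:ℚ)+1-j) := by
    have := lemA' (m+1) (j+1) (by omega)
    rw [eq_div_iff hne1]
    push_cast at this ⊢
    linarith [this]
  have h5 : ((m+j+3).choose (j+1) : ℚ) = ((m:ℚ)+(j:ℚ)+3) * y / ((m:ℚ)+2) := by
    have := lemA' (m+j+2) (j+1) (by omega)
    rw [eq_div_iff hne3]
    have e : m+j+2+1 = m+j+3 := by omega
    rw [e] at this
    push_cast at this ⊢
    linarith [this]
  have h4 : (m.choose (j+1) : ℚ) = ((m:ℚ)-j) * x / ((m:ℚ)+1) := by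
    have := lemA' m (j+1) (by omega)
    rw [eq_div_iff hne2]
    push_cast at this ⊢
    linarith [this]
  have h6 : ((m+j+1).choose (j+1) : ℚ) = ((m:ℚ)+1) * y / ((m:ℚ)+(j:ℚ)+2) := by
    have := lemA' (m+j+1) (j+1) (by omega)
    rw [eq_div_iff hne4]
    have e : m+j+1+1 = m+j+2 := by omega
    rw [e] at this
    push_cast at this ⊢
    linarith [this]
  have h1 : ((m+1).choose j : ℚ) = x * ((j:ℚ)+1) / ((m:ℚ)+1-j) := by
    have := Nat.choose_succ_right_eq (m+1) j
    have hc : ((m + 1 - j : ℕ) : ℚ) = (m:ℚ) + 1 - j := by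
      push_cast [Nat.cast_sub (by omega : j ≤ m + 1)]; ring
    rw [eq_div_iff hne1]
    have := congrArg (Nat.cast (R := ℚ)) this
    push_cast at this
    rw [hc] at this
    linarith [this]
  have h2 : ((m+j+1).choose j : ℚ) = y * ((j:ℚ)+1) / ((m:ℚ)+(j:ℚ)+2) := by
    have := Nat.add_one_mul_choose_eq (m+j+1) j
    have e : m+j+1+1 = m+j+2 := by omega
    rw [e] at this
    have := congrArg (Nat.cast (R := ℚ)) this
    push_cast at this
    rw [eq_div_iff hne4]
    linarith [this]
  simp only [Aq, qq]
  rw [show m+2+(j+1) = m+j+3 from by omega, show m+1+(j+1) = m+j+2 from by omega,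
      show m+(j+1) = m+j+1 from by omega, show m+1+j = m+j+1 from by omega]
  rw [h3, h5, h4, h6, h1, h2]
  rw [← hx, ← hy]
  push_cast
  field_simp
  ring

/-- The telescoping certificate `g`. -/
noncomputable def gg (n : ℕ) : ℕ → ℚ
  | 0 => 0
  | (k+1) => Aq n k * qq n (k+1)

lemma perk_zero (m : ℕ) :
    ((m:ℚ)+2)^2 * Aq (m+2) 0 - (11*(m:ℚ)^2+33*(m:ℚ)+25) * Aq (m+1) 0
      - ((m:ℚ)+1)^2 * Aq m 0 = gg (m+1) 1 - gg (m+1) 0 := by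
  simp [Aq, qq, gg]
  push_cast
  ring

lemma perk_top (m : ℕ) :
    ((m:ℚ)+2)^2 * Aq (m+2) (m+2) - (11*(m:ℚ)^2+33*(m:ℚ)+25) * Aq (m+1) (m+2)
      - ((m:ℚ)+1)^2 * Aq m (m+2) = gg (m+1) (m+3) - gg (m+1) (m+2) := by
  have z1 : (m+1).choose (m+2) = 0 := Nat.choose_eq_zero_of_lt (by omega)
  have z2 : m.choose (m+2) = 0 := Nat.choose_eq_zero_of_lt (by omega)
  show _ = Aq (m+1) (m+2) * qq (m+1) (m+3) - Aq (m+1) (m+1) * qq (m+1) (m+2)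
  have k1 : (m+2) * (2*m+4).choose (m+2) = (2*m+4) * (2*m+3).choose (m+2) := by
    have := lemA (2*m+3) (m+2)
    rw [show 2*m+3+1 = 2*m+4 from by omega] at this
    rw [show 2*m+4-(m+2) = m+2 from by omega] at this
    exact this
  have k2 : (2*m+3) * (2*m+2).choose (m+1) = (2*m+3).choose (m+2) * (m+2) := by
    have := Nat.add_one_mul_choose_eq (2*m+2) (m+1)
    rw [show 2*m+2+1 = 2*m+3 from by omega, show m+1+1 = m+2 from by omega] at this
    exact this
  have k1' := congrArg (Nat.cast (R := ℚ)) k1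
  have k2' := congrArg (Nat.cast (R := ℚ)) k2
  push_cast at k1' k2'
  simp only [Aq, qq, z1, z2, Nat.choose_self]
  rw [show m+2+(m+2) = 2*m+4 from by omega, show m+1+(m+1) = 2*m+2 from by omega,
      show m+1+(m+2) = 2*m+3 from by omega, show m+(m+2) = 2*m+2 from by omega]
  push_cast
  linear_combination ((m:ℚ)+2) * k1' - 2*((m:ℚ)+2) * k2'

lemma perk (m : ℕ) (k : ℕ) (hk : k < m + 3) :
    ((m:ℚ)+2)^2 * Aq (m+2) k - (11*(m:ℚ)^2+33*(m:ℚ)+25) * Aq (m+1) k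
      - ((m:ℚ)+1)^2 * Aq m k = gg (m+1) (k+1) - gg (m+1) k := by
  match k with
  | 0 => exact perk_zero m
  | (j+1) =>
    rcases Nat.lt_or_ge j (m+1) with h | h
    · exact perk_main m j (by omega)
    · have : j + 1 = m + 2 := by omega
      rw [this]; exact perk_top m

lemma aperyB_cast (n : ℕ) : (aperyB n : ℚ) = ∑ k ∈ Finset.range (n+1), Aq n k := by
  simp only [aperyB, Aq]
  push_cast
  rfl

lemma aperyB_rec (m : ℕ) :
    ((m:ℚ)+2)^2 * aperyB (m+2)
      = (11*(m:ℚ)^2+33*(m:ℚ)+25) * aperyB (m+1) + ((m:ℚ)+1)^2 * aperyB m := by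
  have htel : ∑ k ∈ Finset.range (m+3), (gg (m+1) (k+1) - gg (m+1) k)
      = gg (m+1) (m+3) - gg (m+1) 0 := Finset.sum_range_sub (gg (m+1)) (m+3)
  have hzero : gg (m+1) (m+3) = 0 := by
    show Aq (m+1) (m+2) * qq (m+1) (m+3) = 0
    simp [Aq, Nat.choose_eq_zero_of_lt (show m+1 < m+2 by omega)]
  have hsum : ∑ k ∈ Finset.range (m+3),
      (((m:ℚ)+2)^2 * Aq (m+2) k - (11*(m:ℚ)^2+33*(m:ℚ)+25) * Aq (m+1) k
        - ((m:ℚ)+1)^2 * Aq m k) = 0 := by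
    rw [Finset.sum_congr rfl (fun k hk => perk m k (Finset.mem_range.mp hk))]
    rw [htel, hzero]
    simp [gg]
  have e2 : ∑ k ∈ Finset.range (m+3), Aq (m+2) k = (aperyB (m+2) : ℚ) := by
    rw [aperyB_cast]
  have e1 : ∑ k ∈ Finset.range (m+3), Aq (m+1) k = (aperyB (m+1) : ℚ) := by
    rw [aperyB_cast, Finset.sum_range_succ]
    simp [Aq, Nat.choose_eq_zero_of_lt (show m+1 < m+2 by omega)]
  have e0 : ∑ k ∈ Finset.range (m+3), Aq m k = (aperyB m : ℚ) := by
    rw [aperyB_cast, Finset.sum_range_succ, Finset.sum_range_succ]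
    simp [Aq, Nat.choose_eq_zero_of_lt (show m < m+1 by omega),
      Nat.choose_eq_zero_of_lt (show m < m+2 by omega)]
  rw [Finset.sum_sub_distrib, Finset.sum_sub_distrib, ← Finset.mul_sum, ← Finset.mul_sum,
    ← Finset.mul_sum, e2, e1, e0] at hsum
  linarith

lemma aperyB_pos (n : ℕ) : 0 < aperyB n := by
  have h : (1:ℕ) ≤ aperyB n := by
    have := Finset.single_le_sum
      (f := fun k => (Nat.choose n k) ^ 2 * Nat.choose (n + k) k)
      (fun i _ => Nat.zero_le _) (Finset.mem_range.mpr (Nat.succ_pos n))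
    simpa [aperyB] using this
  omega

lemma step_key (n a b c : ℚ) (hn : 1 ≤ n) (ha : 0 < a) (hb : 0 < b)
    (H1 : (n+2)^2*c = (11*n^2+33*n+25)*b + (n+1)^2*a)
    (hL : (11*n^2+11*n+3)*a*b + n^2*a^2 < (n+1)^2*b^2) :
    (n+3)^2*c^2 < (11*n^2+55*n+69)*c*b + (n+2)^2*b^2 := by
  have key : n^2*(((11*n^2+55*n+69)*c*b + (n+2)^2*b^2 - (n+3)^2*c^2) * (n+2)^4)
      = (n^6+10*n^5+39*n^4+76*n^3+79*n^2+42*n+9)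
          * ((n+1)^2*b^2 - ((11*n^2+11*n+3)*a*b + n^2*a^2))
        + (22*n^6+176*n^5+541*n^4+813*n^3+624*n^2+225*n+27) * (a*b)
        + (121*n^6+898*n^5+2423*n^4+2824*n^3+1167*n^2-60*n-9) * b^2 := by
    linear_combination
      (n^2*((11*n^2+55*n+69)*(n+2)^2*b
        - (n+3)^2*((n+2)^2*c + ((11*n^2+33*n+25)*b+(n+1)^2*a)))) * H1
  have p1 : 0 < (n^6+10*n^5+39*n^4+76*n^3+79*n^2+42*n+9)
      * ((n+1)^2*b^2 - ((11*n^2+11*n+3)*a*b + n^2*a^2)) := by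
    apply mul_pos
    · nlinarith [pow_pos (lt_of_lt_of_le one_pos hn) 6, pow_pos (lt_of_lt_of_le one_pos hn) 5,
        pow_pos (lt_of_lt_of_le one_pos hn) 4, pow_pos (lt_of_lt_of_le one_pos hn) 3]
    · linarith
  have p2 : 0 < (22*n^6+176*n^5+541*n^4+813*n^3+624*n^2+225*n+27) * (a*b) := by
    apply mul_pos
    · nlinarith [pow_pos (lt_of_lt_of_le one_pos hn) 6, pow_pos (lt_of_lt_of_le one_pos hn) 5,
        pow_pos (lt_of_lt_of_le one_pos hn) 4, pow_pos (lt_of_lt_of_le one_pos hn) 3]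
    · exact mul_pos ha hb
  have p3 : 0 < (121*n^6+898*n^5+2423*n^4+2824*n^3+1167*n^2-60*n-9) * b^2 := by
    apply mul_pos
    · nlinarith [pow_pos (lt_of_lt_of_le one_pos hn) 6, pow_pos (lt_of_lt_of_le one_pos hn) 5,
        pow_pos (lt_of_lt_of_le one_pos hn) 4, pow_pos (lt_of_lt_of_le one_pos hn) 3,
        sq_nonneg (n-1), mul_pos (lt_of_lt_of_le one_pos hn) (lt_of_lt_of_le one_pos hn)]
    · positivity
  have hpos : 0 < n^2*(((11*n^2+55*n+69)*c*b + (n+2)^2*b^2 - (n+3)^2*c^2) * (n+2)^4) := by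
    rw [key]; linarith
  have hn2 : 0 < n^2*(n+2)^4 := by positivity
  nlinarith [hpos, hn2]

set_option maxHeartbeats 1600000 in
lemma Tq_step (m : ℕ)
    (hT1 : ((aperyB (m+1) : ℚ))^2 < (aperyB m : ℚ) * (aperyB (m+2) : ℚ))
    (hT2 : ((aperyB (m+2) : ℚ))^2 < (aperyB (m+1) : ℚ) * (aperyB (m+3) : ℚ)) :
    ((aperyB (m+3) : ℚ))^2 < (aperyB (m+2) : ℚ) * (aperyB (m+4) : ℚ) := by
  set a : ℚ := (aperyB (m+1) : ℚ) with hadef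
  set b : ℚ := (aperyB (m+2) : ℚ) with hbdef
  set c : ℚ := (aperyB (m+3) : ℚ) with hcdef
  set d : ℚ := (aperyB (m+4) : ℚ) with hddef
  set z : ℚ := (aperyB m : ℚ) with hzdef
  have ha : 0 < a := by rw [hadef]; exact_mod_cast aperyB_pos (m+1)
  have hb : 0 < b := by rw [hbdef]; exact_mod_cast aperyB_pos (m+2)
  have hrec0 := aperyB_rec m
  have hrec1 := aperyB_rec (m+1)
  have hrec2 := aperyB_rec (m+2)
  push_cast at hrec1 hrec2
  set n : ℚ := (m : ℚ) + 1 with hndef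
  have hn : 1 ≤ n := by
    have : (0:ℚ) ≤ (m:ℚ) := Nat.cast_nonneg m
    rw [hndef]; linarith
  have H1 : (n+2)^2*c = (11*n^2+33*n+25)*b + (n+1)^2*a := by
    rw [hndef]; linear_combination hrec1
  have hmul : ((m:ℚ)+2)^2*b^2
      = (11*(m:ℚ)^2+33*(m:ℚ)+25)*(a*b) + ((m:ℚ)+1)^2*(z*b) := by
    linear_combination b * hrec0
  have hL : (11*n^2+11*n+3)*a*b + n^2*a^2 < (n+1)^2*b^2 := by
    have h2 : ((m:ℚ)+1)^2*a^2 < ((m:ℚ)+1)^2*(z*b) := by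
      apply mul_lt_mul_of_pos_left _ (by positivity)
      calc a^2 < z * (aperyB (m+2) : ℚ) := hT1
        _ = z * b := by rw [hbdef]
    rw [hndef]
    nlinarith [hmul, h2]
  have hkey := step_key n a b c hn ha hb H1 hL
  have hmul4 : (n+3)^2*(d*b)
      = (11*n^2+55*n+69)*(c*b) + (n+2)^2*b^2 := by
    rw [hndef]; linear_combination b * hrec2
  have : (n+3)^2*c^2 < (n+3)^2*(d*b) := by
    rw [hmul4]; nlinarith [hkey]
  have hpos : (0:ℚ) < (n+3)^2 := by positivity
  nlinarith [this, hpos]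

lemma Tq_all (m : ℕ) : ((aperyB (m+1) : ℚ))^2 < (aperyB m : ℚ) * (aperyB (m+2) : ℚ) := by
  have hB0 : aperyB 0 = 1 := by simp [aperyB, Finset.sum_range_succ] <;> decide
  have hB1 : aperyB 1 = 3 := by simp [aperyB, Finset.sum_range_succ] <;> decide
  have hB2 : aperyB 2 = 19 := by simp [aperyB, Finset.sum_range_succ] <;> decide
  have hB3 : aperyB 3 = 147 := by simp [aperyB, Finset.sum_range_succ] <;> decide
  have key : ∀ k : ℕ, ((aperyB (k+1) : ℚ))^2 < (aperyB k : ℚ) * (aperyB (k+2) : ℚ) ∧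
      ((aperyB (k+2) : ℚ))^2 < (aperyB (k+1) : ℚ) * (aperyB (k+3) : ℚ) := by
    intro k
    induction k with
    | zero => rw [hB0, hB1, hB2, hB3]; norm_num
    | succ j ih => exact ⟨ih.2, Tq_step j ih.1 ih.2⟩
  exact (key m).1


theorem aperyB_strict_log_convex (n : ℕ) (hn : 1 ≤ n) :
    aperyB n ^ 2 < aperyB (n - 1) * aperyB (n + 1) := by
  obtain ⟨m, rfl⟩ : ∃ m, n = m + 1 := ⟨n - 1, by omega⟩
  have h := Tq_all m
  rw [show m + 1 - 1 = m from by omega]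
  exact_mod_cast h
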